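/- For every candidate set C ⊆ S, LB_1(C) ≤ LB_3(C). -/

import Mathlib

/-!
Formalization of guessing games (Wordle-style), following the paper's definitions:
guesses `G`, secrets `S ⊆ G`, responses `R` with `|R| > 1`, affirmative response
`r* ∈ R`, and an answering function `a` with `a(g,s) = r* ↔ g = s`.
-/

structure GuessingGame (α ρ : Type*) [DecidableEq α] [DecidableEq ρ] where
  G : Finset α
  S : Finset α
  R : Finset ρ
  rstar : ρ
  ans : α → α → ρ
  S_subset_G : S ⊆ G
  one_lt_card_R : 1 < R.card
  rstar_mem : rstar ∈ R
  ans_mem : ∀ g ∈ G, ∀ s ∈ S, ans g s ∈ R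
  ans_eq_rstar_iff : ∀ g ∈ G, ∀ s ∈ S, (ans g s = rstar ↔ g = s)

namespace GuessingGame

variable {α ρ : Type*} [DecidableEq α] [DecidableEq ρ] (gm : GuessingGame α ρ)

/-- The split `C_{g,r} = {c ∈ C : a(g,c) = r}`. -/
def split (C : Finset α) (g : α) (r : ρ) : Finset α :=
  C.filter fun c => gm.ans g c = r

/-- `nSplits(g,C) = |{r ∈ R : C_{g,r} ≠ ∅}|`. -/
def nSplits (g : α) (C : Finset α) : ℕ :=
  (gm.R.filter fun r => (gm.split C g r).Nonempty).card

/-- The useful guesses `UG(C)`: for `|C| > 1` the guesses `g ∈ G` with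
`nSplits(g,C) ≠ 1`; for `|C| ≤ 1`, `UG(C) = C`. -/
def UG (C : Finset α) : Finset α :=
  if 1 < C.card then gm.G.filter fun g => gm.nSplits g C ≠ 1 else C

/-- `MaxSplits(C) = max_{g ∈ G} nSplits(g,C)`. -/
def MaxSplits (C : Finset α) : ℕ :=
  gm.G.sup fun g => gm.nSplits g C

end GuessingGame

/-- `Bound(n,b)`: `Bound(0,b) = 0`, `Bound(n,1) = n(n+1)/2`, and for `n > 0`, `b > 1`,
`Bound(n,b) = Σ_{i=1}^{k} i·b^{i-1} + (k+1)·(n - (b^k - 1)/(b-1))` where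
`k = ⌊log_b (n(b-1)+1)⌋`. -/
def Bound (n b : ℕ) : ℕ :=
  if n = 0 then 0
  else if b = 1 then n * (n + 1) / 2
  else
    (∑ i ∈ Finset.range (Nat.log b (n * (b - 1) + 1)), (i + 1) * b ^ i) +
      (Nat.log b (n * (b - 1) + 1) + 1) *
        (n - (b ^ Nat.log b (n * (b - 1) + 1) - 1) / (b - 1))

namespace GuessingGame

variable {α ρ : Type*} [DecidableEq α] [DecidableEq ρ] (gm : GuessingGame α ρ)

/-- Fuel-based implementation of the well-founded recursion defining `MinTotal`:
`MinTotal(∅) = 0` and for nonempty `C`,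
`MinTotal(C) = min_{g ∈ UG(C)} (|C| + Σ_{r ∈ R \ {r*}} MinTotal(C_{g,r}))`.
Fuel `|C|` suffices since for a useful guess every split is a proper subset of `C`. -/
noncomputable def MinTotalAux : ℕ → Finset α → ℕ
  | 0, _ => 0
  | n + 1, C =>
    if C = ∅ then 0
    else
      sInf (↑((gm.UG C).image fun g =>
        C.card + ∑ r ∈ gm.R.erase gm.rstar, MinTotalAux n (gm.split C g r)) : Set ℕ)

/-- `MinTotal(C)`. -/
noncomputable def MinTotal (C : Finset α) : ℕ :=
  gm.MinTotalAux C.card C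

/-- `V*(g,C) = |C| + Σ_{r ∈ R \ {r*}} MinTotal(C_{g,r})`. -/
noncomputable def Vstar (g : α) (C : Finset α) : ℕ :=
  C.card + ∑ r ∈ gm.R.erase gm.rstar, gm.MinTotal (gm.split C g r)

/-- The lower bounds `LB_i` (`i ≥ 1`; `LB 0` is junk):
`LB_1(C) = Bound(|C|, MaxSplits(S))`, `LB_2(C) = Bound(|C|, MaxSplits(C))`, and for
`i ≥ 1`, `LB_{i+2}(∅) = 0` and `LB_{i+2}(C) = min_{g ∈ UG(C)} V_i(g,C)` for nonempty `C`,
where `V_i(g,C) = |C| + Σ_{r ∈ R \ {r*}} LB_i(C_{g,r})`. -/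
noncomputable def LB : ℕ → Finset α → ℕ
  | 0, _ => 0
  | 1, C => Bound C.card (gm.MaxSplits gm.S)
  | 2, C => Bound C.card (gm.MaxSplits C)
  | n + 3, C =>
    if C = ∅ then 0
    else
      sInf (↑((gm.UG C).image fun g =>
        C.card + ∑ r ∈ gm.R.erase gm.rstar, LB (n + 1) (gm.split C g r)) : Set ℕ)

/-- `V_i(g,C) = |C| + Σ_{r ∈ R \ {r*}} LB_i(C_{g,r})`. -/
noncomputable def V (i : ℕ) (g : α) (C : Finset α) : ℕ :=
  C.card + ∑ r ∈ gm.R.erase gm.rstar, gm.LB i (gm.split C g r)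

end GuessingGame

namespace Aux13

def Lg (b i : ℕ) : ℕ := ∑ t ∈ Finset.range i, b ^ t

def fB (n b : ℕ) : ℕ := ∑ i ∈ Finset.range n, (n - Lg b i)

lemma Lg_succ (b i : ℕ) : Lg b (i + 1) = 1 + b * Lg b i := by
  simp only [Lg, Finset.sum_range_succ', pow_succ, pow_zero, Finset.mul_sum]
  rw [add_comm]
  congr 1
  exact Finset.sum_congr rfl fun t _ => by ring

lemma Lg_mono (b : ℕ) : Monotone (Lg b) := by
  intro i j h
  exact Finset.sum_le_sum_of_subset (Finset.range_subset_range.mpr h)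

lemma self_le_Lg {b : ℕ} (hb : 1 ≤ b) (i : ℕ) : i ≤ Lg b i := by
  calc i = ∑ t ∈ Finset.range i, 1 := by simp
  _ ≤ Lg b i := Finset.sum_le_sum fun t _ => Nat.one_le_pow _ _ hb

lemma geom (c k : ℕ) : c * Lg (c + 1) k + 1 = (c + 1) ^ k := by
  induction k with
  | zero => simp [Lg]
  | succ k ih =>
    have : Lg (c+1) (k+1) = Lg (c+1) k + (c+1)^k := Finset.sum_range_succ _ _
    rw [this, pow_succ, mul_add, add_right_comm, ih]
    ring

lemma fB_pad {b m N : ℕ} (hb : 1 ≤ b) (h : m ≤ N) :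
    ∑ i ∈ Finset.range N, (m - Lg b i) = fB m b := by
  unfold fB
  symm
  apply Finset.sum_subset (Finset.range_subset_range.mpr h)
  intro i _ hi
  have : m ≤ i := by simpa using hi
  exact Nat.sub_eq_zero_of_le (this.trans (self_le_Lg hb i))

lemma sum_tsub {ι : Type*} (s : Finset ι) (a c : ι → ℕ) :
    (∑ i ∈ s, a i) - (∑ i ∈ s, c i) ≤ ∑ i ∈ s, (a i - c i) := by
  classical
  induction s using Finset.induction with
  | empty => simp
  | insert _ _ hx ih =>
    simp only [Finset.sum_insert hx]
    omega

lemma sum_split (b n : ℕ) : ∀ k, Lg b k ≤ n →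
    ∑ i ∈ Finset.range (k+1), (n - Lg b i) =
      (∑ i ∈ Finset.range k, (i + 1) * b ^ i) + (k + 1) * (n - Lg b k) := by
  intro k
  induction k with
  | zero => simp [Lg]
  | succ k ih =>
    intro hLk
    have hLk' : Lg b k ≤ n := (Lg_mono _ (Nat.le_succ k)).trans hLk
    rw [Finset.sum_range_succ _ (k+1), ih hLk', Finset.sum_range_succ _ k]
    have hstep : Lg b (k+1) = Lg b k + b^k := Finset.sum_range_succ _ _
    have h1 : n - Lg b k = b^k + (n - Lg b (k+1)) := by omega
    rw [h1]
    ring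

lemma Bound_eq_fB {b : ℕ} (hb : 1 ≤ b) (n : ℕ) : Bound n b = fB n b := by
  rcases Nat.eq_zero_or_pos n with rfl | hn
  · simp [Bound, fB]
  rcases eq_or_lt_of_le hb with hb1 | hb2
  · -- b = 1
    have hb1 : b = 1 := hb1.symm
    subst hb1
    have hL : ∀ i, Lg 1 i = i := by intro i; simp [Lg]
    have : fB n 1 = ∑ i ∈ Finset.range n, (n - i) := by
      unfold fB; exact Finset.sum_congr rfl fun i _ => by rw [hL]
    rw [this, Bound, if_neg (by omega), if_pos rfl]
    rw [← Finset.sum_range_reflect (fun i => n - i) n]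
    have : ∀ i ∈ Finset.range n, n - (n - 1 - i) = i + 1 := by
      intro i hi; simp only [Finset.mem_range] at hi; omega
    rw [Finset.sum_congr rfl this]
    have h2 : (∑ i ∈ Finset.range n, (i + 1)) * 2 = n * (n + 1) := by
      rw [Finset.sum_add_distrib, Finset.sum_const, add_mul,
        Finset.sum_range_id_mul_two]
      simp [Finset.card_range]
      cases n with
      | zero => simp
      | succ m => simp [Nat.succ_sub_one]; ring
    omega
  · -- b ≥ 2
    obtain ⟨c, rfl⟩ : ∃ c, b = c + 1 := ⟨b - 1, by omega⟩
    have hc : 1 ≤ c := by omega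
    set k := Nat.log (c+1) (n * c + 1) with hk
    have harg : n * c + 1 ≠ 0 := by omega
    have hpow_le : (c+1) ^ k ≤ n * c + 1 := Nat.pow_log_le_self _ harg
    have hlt : n * c + 1 < (c+1) ^ (k+1) := Nat.lt_pow_succ_log_self (by omega) _
    have hLk : Lg (c+1) k ≤ n := by
      have := geom c k
      have h1 : c * Lg (c+1) k ≤ n * c := by omega
      rw [mul_comm n c] at h1
      exact Nat.le_of_mul_le_mul_left h1 (by omega)
    have hLk1 : n < Lg (c+1) (k+1) := by
      have := geom c (k+1)
      have h1 : n * c < c * Lg (c+1) (k+1) := by omega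
      rw [mul_comm n c] at h1
      exact Nat.lt_of_mul_lt_mul_left h1
    have hdiv : ((c+1) ^ k - 1) / c = Lg (c+1) k := by
      have := geom c k
      have h1 : (c+1)^k - 1 = c * Lg (c+1) k := by omega
      rw [h1, Nat.mul_div_cancel_left _ (by omega)]
    have hBound : Bound n (c+1) =
        (∑ i ∈ Finset.range k, (i + 1) * (c+1) ^ i) + (k + 1) * (n - Lg (c+1) k) := by
      rw [Bound, if_neg (by omega), if_neg (by omega)]
      have h2 : c + 1 - 1 = c := by omega
      rw [h2, ← hk, hdiv]
    rw [hBound]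
    -- fB n b = sum over range (k+1)
    have hfB : fB n (c+1) = ∑ i ∈ Finset.range (k+1), (n - Lg (c+1) i) := by
      unfold fB
      rcases le_total n (k+1) with h | h
      · apply Finset.sum_subset (Finset.range_subset_range.mpr h)
        intro i _ hi
        have : n ≤ i := by simpa using hi
        exact Nat.sub_eq_zero_of_le (this.trans (self_le_Lg (by omega) i))
      · symm
        apply Finset.sum_subset (Finset.range_subset_range.mpr h)
        intro i _ hi
        have hik : k + 1 ≤ i := by simpa using hi
        exact Nat.sub_eq_zero_of_le (hLk1.le.trans (Lg_mono _ hik))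
    rw [hfB, sum_split (c+1) n k hLk]

lemma key {ρ : Type*} [DecidableEq ρ] (R' : Finset ρ) (rstar : ρ) (m : ρ → ℕ) {b : ℕ}
    (hb : 1 ≤ b) (hstar : m rstar ≤ 1) (hrm : rstar ∈ R')
    (hp : (R'.filter fun r => 0 < m r).card ≤ b) :
    fB (∑ r ∈ R', m r) b ≤ (∑ r ∈ R', m r) + ∑ r ∈ R'.erase rstar, fB (m r) b := by
  set n := ∑ r ∈ R', m r with hn
  set E := R'.erase rstar with hE
  have hsumE : ∑ r ∈ E, m r + m rstar = n := Finset.sum_erase_add R' m hrm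
  -- per i claim
  have claim : ∀ i : ℕ, n - Lg b (i+1) ≤ ∑ r ∈ E, (m r - Lg b i) := by
    intro i
    set L := Lg b i with hL
    set P := E.filter (fun r => 0 < m r) with hP
    have hsumP : ∑ r ∈ P, m r = ∑ r ∈ E, m r := by
      apply Finset.sum_filter_of_ne
      intro r _ h; omega
    have h1 : ∑ r ∈ P, m r - P.card * L ≤ ∑ r ∈ P, (m r - L) := by
      have := sum_tsub P m (fun _ => L)
      simpa using this
    have h2 : ∑ r ∈ P, (m r - L) ≤ ∑ r ∈ E, (m r - L) :=
      Finset.sum_le_sum_of_subset (Finset.filter_subset _ _)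
    have hPcard : m rstar + P.card * L ≤ 1 + b * L := by
      rcases Nat.lt_or_ge (m rstar) 1 with hms | hms
      · -- m rstar = 0
        have hms0 : m rstar = 0 := by omega
        have hPle : P.card ≤ b := by
          refine le_trans (Finset.card_le_card ?_) hp
          rw [hP, hE]
          exact Finset.filter_subset_filter _ (Finset.erase_subset _ _)
        have : P.card * L ≤ b * L := Nat.mul_le_mul_right _ hPle
        omega
      · -- m rstar = 1
        have hms1 : m rstar = 1 := by omega
        have hmem : rstar ∈ R'.filter fun r => 0 < m r := by
          simp [Finset.mem_filter, hrm, hms1]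
        have hPeq : P = (R'.filter fun r => 0 < m r).erase rstar := by
          rw [hP, hE, Finset.filter_erase]
        have hPle : P.card ≤ b - 1 := by
          rw [hPeq, Finset.card_erase_of_mem hmem]
          omega
        have : P.card * L ≤ (b - 1) * L := Nat.mul_le_mul_right _ hPle
        have h3 : (b - 1) * L + L = b * L := by
          have : b - 1 + 1 = b := by omega
          calc (b-1) * L + L = (b - 1 + 1) * L := by ring
          _ = b * L := by rw [this]
        omega
    have hLs : Lg b (i+1) = 1 + b * L := Lg_succ b i
    -- combine
    have hms := hstar
    -- n - (1 + b*L) ≤ (n - m rstar) - P.card * L ≤ ...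
    rw [hLs]
    have hEP : ∑ r ∈ E, m r = ∑ r ∈ P, m r := hsumP.symm
    omega
  -- now sum
  rcases Nat.eq_zero_or_pos n with hn0 | hnpos
  · rw [hn0]; simp [fB]
  obtain ⟨k, hk⟩ : ∃ k, n = k + 1 := ⟨n - 1, by omega⟩
  have hfB : fB n b = (∑ i ∈ Finset.range k, (n - Lg b (i+1))) + (n - Lg b 0) := by
    unfold fB
    rw [hk, Finset.sum_range_succ']
  have hL0 : n - Lg b 0 = n := by simp [Lg]
  rw [hfB, hL0]
  have hstep1 : ∑ i ∈ Finset.range k, (n - Lg b (i+1)) ≤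
      ∑ i ∈ Finset.range n, (n - Lg b (i+1)) :=
    Finset.sum_le_sum_of_subset (Finset.range_subset_range.mpr (by omega))
  have hstep2 : ∑ i ∈ Finset.range n, (n - Lg b (i+1)) ≤
      ∑ i ∈ Finset.range n, ∑ r ∈ E, (m r - Lg b i) :=
    Finset.sum_le_sum fun i _ => claim i
  rw [Finset.sum_comm] at hstep2
  have hstep3 : ∀ r ∈ E, ∑ i ∈ Finset.range n, (m r - Lg b i) = fB (m r) b := by
    intro r hr
    apply fB_pad hb
    calc m r ≤ ∑ r ∈ R', m r :=
      Finset.single_le_sum (fun _ _ => Nat.zero_le _) (Finset.mem_of_mem_erase hr)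
    _ = n := rfl
  rw [Finset.sum_congr rfl hstep3] at hstep2
  omega

end Aux13

namespace Aux13

variable {α ρ : Type*} [DecidableEq α] [DecidableEq ρ] (gm : GuessingGame α ρ)

lemma split_sum {C : Finset α} (hC : C ⊆ gm.S) {g : α} (hg : g ∈ gm.G) :
    ∑ r ∈ gm.R, (gm.split C g r).card = C.card :=
  (Finset.card_eq_sum_card_fiberwise (fun c hc => gm.ans_mem g hg c (hC hc))).symm

lemma split_rstar_card {C : Finset α} (hC : C ⊆ gm.S) {g : α} (hg : g ∈ gm.G) :
    (gm.split C g gm.rstar).card ≤ 1 := by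
  have hsub : gm.split C g gm.rstar ⊆ {g} := by
    intro c hc
    simp only [GuessingGame.split, Finset.mem_filter] at hc
    have := (gm.ans_eq_rstar_iff g hg c (hC hc.1)).mp hc.2
    simp [this]
  calc _ ≤ ({g} : Finset α).card := Finset.card_le_card hsub
  _ = 1 := Finset.card_singleton g

lemma nsplits_eq (C : Finset α) (g : α) :
    (gm.R.filter fun r => 0 < (gm.split C g r).card).card = gm.nSplits g C := by
  unfold GuessingGame.nSplits
  congr 1
  apply Finset.filter_congr
  intro r _
  simp [Finset.card_pos]

lemma nSplits_le {C : Finset α} (hC : C ⊆ gm.S) {g : α} (hg : g ∈ gm.G) :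
    gm.nSplits g C ≤ gm.MaxSplits gm.S := by
  have h1 : gm.nSplits g C ≤ gm.nSplits g gm.S := by
    apply Finset.card_le_card
    intro r hr
    simp only [Finset.mem_filter] at hr ⊢
    exact ⟨hr.1, hr.2.mono (Finset.filter_subset_filter _ hC)⟩
  unfold GuessingGame.MaxSplits
  exact h1.trans (Finset.le_sup (f := fun g => gm.nSplits g gm.S) hg)

end Aux13

section Statements

open GuessingGame Aux13

variable {α ρ : Type*} [DecidableEq α] [DecidableEq ρ]

theorem statement_13 (gm : GuessingGame α ρ) (C : Finset α) (hCS : C ⊆ gm.S) :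
    gm.LB 1 C ≤ gm.LB 3 C := by
  classical
  by_cases hC : C = ∅
  · subst hC
    simp [GuessingGame.LB, Bound]
  have hCne : C.Nonempty := Finset.nonempty_iff_ne_empty.mpr hC
  obtain ⟨g0, hg0⟩ := hCne
  have hg0S : g0 ∈ gm.S := hCS hg0
  have hg0G : g0 ∈ gm.G := gm.S_subset_G hg0S
  have hg0split : g0 ∈ gm.split gm.S g0 gm.rstar := by
    simp only [GuessingGame.split, Finset.mem_filter]
    exact ⟨hg0S, (gm.ans_eq_rstar_iff g0 hg0G g0 hg0S).mpr rfl⟩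
  have hb : 1 ≤ gm.MaxSplits gm.S := by
    have h1 : gm.rstar ∈ gm.R.filter fun r => (gm.split gm.S g0 r).Nonempty :=
      Finset.mem_filter.mpr ⟨gm.rstar_mem, ⟨g0, hg0split⟩⟩
    have h2 : 1 ≤ gm.nSplits g0 gm.S := Finset.card_pos.mpr ⟨_, h1⟩
    unfold GuessingGame.MaxSplits
    exact h2.trans (Finset.le_sup (f := fun g => gm.nSplits g gm.S) hg0G)
  have hUGsub : gm.UG C ⊆ gm.G := by
    unfold GuessingGame.UG
    split_ifs
    · exact Finset.filter_subset _ _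
    · exact fun x hx => gm.S_subset_G (hCS hx)
  have hUG : (gm.UG C).Nonempty := by
    unfold GuessingGame.UG
    split_ifs with h1
    · obtain ⟨c, hc, hne⟩ := Finset.exists_mem_ne h1 g0
      have hcS := hCS hc
      have hr : gm.ans g0 c ∈ gm.R := gm.ans_mem g0 hg0G c hcS
      have hrne : gm.ans g0 c ≠ gm.rstar := fun h =>
        hne ((gm.ans_eq_rstar_iff g0 hg0G c hcS).mp h).symm
      refine ⟨g0, Finset.mem_filter.mpr ⟨hg0G, ?_⟩⟩
      have h2 : 1 < gm.nSplits g0 C := by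
        apply Finset.one_lt_card.mpr
        refine ⟨gm.rstar, ?_, gm.ans g0 c, ?_, fun h => hrne h.symm⟩
        · refine Finset.mem_filter.mpr ⟨gm.rstar_mem, ⟨g0, ?_⟩⟩
          simp only [GuessingGame.split, Finset.mem_filter]
          exact ⟨hg0, (gm.ans_eq_rstar_iff g0 hg0G g0 hg0S).mpr rfl⟩
        · refine Finset.mem_filter.mpr ⟨hr, ⟨c, ?_⟩⟩
          simp only [GuessingGame.split, Finset.mem_filter]
          exact ⟨hc, trivial⟩
      omega
    · exact ⟨g0, hg0⟩
  have h3 : gm.LB 3 C = sInf (↑((gm.UG C).image fun g =>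
      C.card + ∑ r ∈ gm.R.erase gm.rstar, gm.LB 1 (gm.split C g r)) : Set ℕ) := by
    show gm.LB (0 + 3) C = _
    rw [GuessingGame.LB, if_neg hC]
  rw [h3]
  apply le_csInf
  · obtain ⟨g, hg⟩ := hUG
    exact ⟨_, Finset.mem_coe.mpr (Finset.mem_image_of_mem _ hg)⟩
  · rintro x hx
    obtain ⟨g, hgU, rfl⟩ := Finset.mem_image.mp (Finset.mem_coe.mp hx)
    have hgG := hUGsub hgU
    show gm.LB 1 C ≤ _
    have hLB1 : ∀ D : Finset α, gm.LB 1 D = Bound D.card (gm.MaxSplits gm.S) :=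
      fun D => rfl
    rw [hLB1, Bound_eq_fB hb]
    have hkey := Aux13.key gm.R gm.rstar (fun r => (gm.split C g r).card) hb
      (split_rstar_card gm hCS hgG) gm.rstar_mem
      (by rw [nsplits_eq]; exact nSplits_le gm hCS hgG)
    rw [split_sum gm hCS hgG] at hkey
    refine hkey.trans ?_
    apply Nat.add_le_add_left
    apply le_of_eq
    exact Finset.sum_congr rfl fun r _ => ((Bound_eq_fB hb _).symm.trans (hLB1 _).symm)

end Statements
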